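/- Let M be a map with flag set F and generators s0, s1, s2, and let r0, r1, r2 be the truncation generators on F × {0,1,2}. Then the number of orbits of ⟨r0, r1⟩ on F × {0,1,2} equals the number of orbits of ⟨s1, s2⟩ on F plus the number of orbits of ⟨s0, s1⟩ on F; that is, the faces of the truncated map Tr(M) are in bijection with the disjoint union of the vertices and the faces of M. -/

import Mathlib

open MulAction

/-- the number of faces of Tr(M) (orbits of ⟨r0,r1⟩ on F × {0,1,2}) equals
the number of vertices of M (orbits of ⟨s1,s2⟩) plus the number of faces of M
(orbits of ⟨s0,s1⟩). -/
theorem truncation_face_count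
    {F : Type*} [Fintype F] [Nonempty F]
    (s0 s1 s2 : Equiv.Perm F)
    (hs0i : s0 * s0 = 1) (hs0f : ∀ x, s0 x ≠ x)
    (hs1i : s1 * s1 = 1) (hs1f : ∀ x, s1 x ≠ x)
    (hs2i : s2 * s2 = 1) (hs2f : ∀ x, s2 x ≠ x)
    (hcomm : s0 * s2 = s2 * s0)
    (hs02i : (s0 * s2) * (s0 * s2) = 1) (hs02f : ∀ x, (s0 * s2) x ≠ x)
    (htrans : ∀ x y : F, ∃ g ∈ Subgroup.closure ({s0, s1, s2} : Set (Equiv.Perm F)), g x = y)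
    (r0 r1 r2 : Equiv.Perm (F × Fin 3))
    (hr0 : ∀ Φ : F, r0 (Φ, 0) = (s1 Φ, 0) ∧ r0 (Φ, 1) = (s0 Φ, 1) ∧ r0 (Φ, 2) = (s1 Φ, 2))
    (hr1 : ∀ Φ : F, r1 (Φ, 0) = (s2 Φ, 0) ∧ r1 (Φ, 1) = (Φ, 2) ∧ r1 (Φ, 2) = (Φ, 1))
    (hr2 : ∀ Φ : F, r2 (Φ, 0) = (Φ, 2) ∧ r2 (Φ, 1) = (s2 Φ, 1) ∧ r2 (Φ, 2) = (Φ, 0)) :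
    Nat.card (MulAction.orbitRel.Quotient (↥(Subgroup.closure ({r0, r1} : Set (Equiv.Perm (F × Fin 3))))) (F × Fin 3)) =
      Nat.card (MulAction.orbitRel.Quotient (↥(Subgroup.closure ({s1, s2} : Set (Equiv.Perm F)))) F) +
      Nat.card (MulAction.orbitRel.Quotient (↥(Subgroup.closure ({s0, s1} : Set (Equiv.Perm F)))) F) := by
  classical
  set G := Subgroup.closure ({r0, r1} : Set (Equiv.Perm (F × Fin 3))) with hGdef
  set Vg := Subgroup.closure ({s1, s2} : Set (Equiv.Perm F)) with hVdef
  set Fg := Subgroup.closure ({s0, s1} : Set (Equiv.Perm F)) with hFdef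
  have hr0G : r0 ∈ G := Subgroup.subset_closure (by simp)
  have hr1G : r1 ∈ G := Subgroup.subset_closure (by simp)
  have hs1V : s1 ∈ Vg := Subgroup.subset_closure (by simp)
  have hs2V : s2 ∈ Vg := Subgroup.subset_closure (by simp)
  have hs0F : s0 ∈ Fg := Subgroup.subset_closure (by simp)
  have hs1F : s1 ∈ Fg := Subgroup.subset_closure (by simp)
  have hi3 : ∀ i : Fin 3, i = 0 ∨ i = 1 ∨ i = 2 := by decide
  -- lifting lemmas
  have lift0 : ∀ h ∈ Vg, ∃ g ∈ G, ∀ Φ : F, g (Φ, (0 : Fin 3)) = (h Φ, 0) := by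
    intro h hh
    induction hh using Subgroup.closure_induction with
    | mem t ht =>
      rcases ht with rfl | rfl
      · exact ⟨r0, hr0G, fun Φ => (hr0 Φ).1⟩
      · exact ⟨r1, hr1G, fun Φ => (hr1 Φ).1⟩
    | one => exact ⟨1, one_mem _, fun Φ => rfl⟩
    | mul x y hx hy ihx ihy =>
      obtain ⟨gx, hgx, hgx'⟩ := ihx
      obtain ⟨gy, hgy, hgy'⟩ := ihy
      refine ⟨gx * gy, mul_mem hgx hgy, fun Φ => ?_⟩
      simp [Equiv.Perm.mul_apply, hgy', hgx']
    | inv x hx ihx =>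
      obtain ⟨g, hg, hg'⟩ := ihx
      refine ⟨g⁻¹, inv_mem hg, fun Φ => ?_⟩
      have h2 := hg' (x⁻¹ Φ)
      rw [show x (x⁻¹ Φ) = Φ from (Equiv.eq_symm_apply x).mp rfl] at h2
      rw [← h2]
      exact Equiv.Perm.inv_eq_iff_eq.mpr rfl
  have lift1 : ∀ h ∈ Fg, ∃ g ∈ G, ∀ Φ : F, g (Φ, (1 : Fin 3)) = (h Φ, 1) := by
    intro h hh
    induction hh using Subgroup.closure_induction with
    | mem t ht =>
      rcases ht with rfl | rfl
      · exact ⟨r0, hr0G, fun Φ => (hr0 Φ).2.1⟩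
      · refine ⟨r1 * r0 * r1, mul_mem (mul_mem hr1G hr0G) hr1G, fun Φ => ?_⟩
        simp [Equiv.Perm.mul_apply, (hr1 Φ).2.1, (hr0 Φ).2.2, (hr1 (t Φ)).2.2]
    | one => exact ⟨1, one_mem _, fun Φ => rfl⟩
    | mul x y hx hy ihx ihy =>
      obtain ⟨gx, hgx, hgx'⟩ := ihx
      obtain ⟨gy, hgy, hgy'⟩ := ihy
      refine ⟨gx * gy, mul_mem hgx hgy, fun Φ => ?_⟩
      simp [Equiv.Perm.mul_apply, hgy', hgx']
    | inv x hx ihx =>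
      obtain ⟨g, hg, hg'⟩ := ihx
      refine ⟨g⁻¹, inv_mem hg, fun Φ => ?_⟩
      have h2 := hg' (x⁻¹ Φ)
      rw [show x (x⁻¹ Φ) = Φ from (Equiv.eq_symm_apply x).mp rfl] at h2
      rw [← h2]
      exact Equiv.Perm.inv_eq_iff_eq.mpr rfl
  -- the classifying map
  let f : F × Fin 3 → (orbitRel.Quotient ↥Vg F) ⊕ (orbitRel.Quotient ↥Fg F) :=
    fun x => if x.2 = 0 then Sum.inl (Quotient.mk'' x.1) else Sum.inr (Quotient.mk'' x.1)
  have relV : ∀ t, t ∈ Vg → ∀ Φ : F,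
      (Quotient.mk'' (t Φ) : orbitRel.Quotient ↥Vg F) = Quotient.mk'' Φ := by
    intro t ht Φ
    exact Quotient.sound' ⟨⟨t, ht⟩, rfl⟩
  have relF : ∀ t, t ∈ Fg → ∀ Φ : F,
      (Quotient.mk'' (t Φ) : orbitRel.Quotient ↥Fg F) = Quotient.mk'' Φ := by
    intro t ht Φ
    exact Quotient.sound' ⟨⟨t, ht⟩, rfl⟩
  have hfG : ∀ g ∈ G, ∀ x, f (g x) = f x := by
    intro g hg
    induction hg using Subgroup.closure_induction with
    | mem t ht =>
      rcases ht with rfl | rfl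
      · rintro ⟨Φ, i⟩
        rcases hi3 i with rfl | rfl | rfl
        · simp [f, (hr0 Φ).1, relV s1 hs1V]
        · simp [f, (hr0 Φ).2.1, relF s0 hs0F]
        · simp [f, (hr0 Φ).2.2, relF s1 hs1F]
      · rintro ⟨Φ, i⟩
        rcases hi3 i with rfl | rfl | rfl
        · simp [f, (hr1 Φ).1, relV s2 hs2V]
        · simp [f, (hr1 Φ).2.1]
        · simp [f, (hr1 Φ).2.2]
    | one => intro x; rfl
    | mul x y hx hy ihx ihy =>
      intro z
      rw [Equiv.Perm.mul_apply, ihx, ihy]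
    | inv x hx ihx =>
      intro z
      have h2 := ihx (x⁻¹ z)
      rw [show x (x⁻¹ z) = z from (Equiv.eq_symm_apply x).mp rfl] at h2
      exact h2.symm
  have hflift : ∀ a b : F × Fin 3, (orbitRel ↥G (F × Fin 3)).r a b → f a = f b := by
    rintro a b ⟨g, rfl⟩
    exact hfG g.1 g.2 b
  let fbar : orbitRel.Quotient ↥G (F × Fin 3) →
      (orbitRel.Quotient ↥Vg F) ⊕ (orbitRel.Quotient ↥Fg F) :=
    Quotient.lift f hflift
  have hfbar : ∀ x : F × Fin 3, fbar (Quotient.mk'' x) = f x := fun _ => rfl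
  -- layer 2 ~ layer 1
  have rel21 : ∀ Φ : F,
      (Quotient.mk'' (Φ, (2 : Fin 3)) : orbitRel.Quotient ↥G (F × Fin 3)) =
        Quotient.mk'' (Φ, (1 : Fin 3)) :=
    fun Φ => Quotient.sound' ⟨⟨r1, hr1G⟩, (hr1 Φ).2.1⟩
  have rel11 : ∀ Φ Ψ : F, Φ ∈ orbit (↥Fg) Ψ →
      (Quotient.mk'' (Φ, (1 : Fin 3)) : orbitRel.Quotient ↥G (F × Fin 3)) =
        Quotient.mk'' (Ψ, (1 : Fin 3)) := by
    intro Φ Ψ h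
    obtain ⟨t, ht⟩ := h
    obtain ⟨g, hg, hg'⟩ := lift1 t.1 t.2
    refine Quotient.sound' ⟨⟨g, hg⟩, ?_⟩
    show g (Ψ, 1) = (Φ, 1)
    rw [hg' Ψ]
    have : (t : Equiv.Perm F) Ψ = Φ := ht
    rw [this]
  have hbij : Function.Bijective fbar := by
    constructor
    · intro a b
      induction a using Quotient.inductionOn' with
      | h x =>
        induction b using Quotient.inductionOn' with
        | h y =>
          obtain ⟨Φ, i⟩ := x
          obtain ⟨Ψ, j⟩ := y
          intro hxy
          rcases hi3 i with rfl | rfl | rfl <;> rcases hi3 j with rfl | rfl | rfl <;>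
            simp only [f, hfbar] at hxy <;> simp at hxy
          · -- 0 0
            obtain ⟨t, ht⟩ : Φ ∈ orbit (↥Vg) Ψ := Quotient.exact' hxy
            obtain ⟨g, hg, hg'⟩ := lift0 t.1 t.2
            refine Quotient.sound' ⟨⟨g, hg⟩, ?_⟩
            show g (Ψ, 0) = (Φ, 0)
            rw [hg' Ψ]
            have : (t : Equiv.Perm F) Ψ = Φ := ht
            rw [this]
          · exact rel11 Φ Ψ (Quotient.exact' hxy)
          · exact (rel11 Φ Ψ (Quotient.exact' hxy)).trans (rel21 Ψ).symm
          · exact (rel21 Φ).trans (rel11 Φ Ψ (Quotient.exact' hxy))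
          · exact ((rel21 Φ).trans (rel11 Φ Ψ (Quotient.exact' hxy))).trans (rel21 Ψ).symm
    · rintro (q | q)
      · induction q using Quotient.inductionOn' with
        | h Φ => exact ⟨Quotient.mk'' (Φ, 0), by simp [hfbar, f]⟩
      · induction q using Quotient.inductionOn' with
        | h Φ => exact ⟨Quotient.mk'' (Φ, 1), by simp [hfbar, f]⟩
  have hcard : Nat.card (orbitRel.Quotient ↥G (F × Fin 3)) =
      Nat.card ((orbitRel.Quotient ↥Vg F) ⊕ (orbitRel.Quotient ↥Fg F)) :=
    Nat.card_congr (Equiv.ofBijective fbar hbij)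
  rw [hcard, Nat.card_sum]
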